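/- arXiv:2105.10468 — 4 statements merged into one kernel-verified Lean document; each statement's English description precedes it below -/
import Mathlib

section
/- (Mass conservation of CNFD) Let 0 < ε ≤ 1, τ > 0, and let V^{n+1/2}_j, A^{n+1/2}_{1,j} ∈ ℝ for j = 0,…,N and n ≥ 0. Suppose the sequence of periodic grid functions Φⁿ (n ≥ 0) satisfies the CNFD scheme: iδ⁺_tΦⁿ_j = (−iσ₁δ_x + σ₃)Φ^{n+1/2}_j + ε(V^{n+1/2}_j I₂ − A^{n+1/2}_{1,j}σ₁)Φ^{n+1/2}_j for all j = 0,…,N−1 and n ≥ 0. Then the discrete mass is conserved: ‖Φⁿ‖²_{l²} = h ∑_{j=0}^{N−1} |Φⁿ_j|² = h ∑_{j=0}^{N−1} |Φ⁰_j|² = ‖Φ⁰‖²_{l²} for all n ≥ 0. -/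
open Complex Matrix Finset

noncomputable section

/-- The Pauli matrix σ₁. -/
def σ1 : Matrix (Fin 2) (Fin 2) ℂ := !![0, 1; 1, 0]

/-- The Pauli matrix σ₃. -/
def σ3 : Matrix (Fin 2) (Fin 2) ℂ := !![1, 0; 0, -1]

/-- Centered spatial finite difference of a (periodic) grid function. -/
def δx (h : ℝ) (U : ℤ → Fin 2 → ℂ) (j : ℤ) : Fin 2 → ℂ :=
  ((2 * h : ℝ) : ℂ)⁻¹ • (U (j + 1) - U (j - 1))

/-- The time average Φ^{n+1/2}. -/
def mid (Φ : ℕ → ℤ → Fin 2 → ℂ) (n : ℕ) (j : ℤ) : Fin 2 → ℂ :=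
  (2 : ℂ)⁻¹ • (Φ (n + 1) j + Φ n j)

lemma key' (a b : ℂ) : ‖a‖^2 - ‖b‖^2 = ((starRingEnd ℂ) (a+b) * (a-b)).re := by
  rw [Complex.sq_norm, Complex.sq_norm]
  simp [Complex.normSq_apply, Complex.mul_re]
  ring

lemma s1mv (v : Fin 2 → ℂ) : σ1.mulVec v = ![v 1, v 0] := by
  funext i; fin_cases i <;> simp [σ1, Matrix.mulVec, dotProduct, Fin.sum_univ_two]

lemma s3mv (v : Fin 2 → ℂ) : σ3.mulVec v = ![v 0, -v 1] := by
  funext i; fin_cases i <;> simp [σ3, Matrix.mulVec, dotProduct, Fin.sum_univ_two]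

/-- auxiliary real quantity `Re ⟨u_p, σ₁ u_q⟩`. -/
def gg (u : ℤ → Fin 2 → ℂ) (p q : ℤ) : ℝ :=
  ((starRingEnd ℂ) (u p 0) * u q 1 + (starRingEnd ℂ) (u p 1) * u q 0).re

/-- Mass conservation of the Crank–Nicolson finite difference (CNFD) method
for the 1D Dirac equation.  Here `Vh n j` and `Ah n j` denote the potential
values `V^{n+1/2}_j` and `A^{n+1/2}_{1,j}`. -/
theorem cnfd_mass_conservation (a b : ℝ) (hab : a < b) (N : ℕ) (hN : 0 < N)
    (hNe : Even N) (h : ℝ) (hh : h = (b - a) / N)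
    (τ ε : ℝ) (hτ : 0 < τ) (hε0 : 0 < ε) (hε1 : ε ≤ 1)
    (Vh Ah : ℕ → ℤ → ℝ)
    (Φ : ℕ → ℤ → Fin 2 → ℂ)
    (hper : ∀ n : ℕ, ∀ j : ℤ, Φ n (j + N) = Φ n j)
    (hscheme : ∀ n : ℕ, ∀ j : ℤ,
      Complex.I • ((τ : ℂ)⁻¹ • (Φ (n + 1) j - Φ n j)) =
        (-Complex.I) • σ1.mulVec (δx h (mid Φ n) j) + σ3.mulVec (mid Φ n j) +
          (ε : ℂ) • (((Vh n j : ℝ) : ℂ) • mid Φ n j -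
            ((Ah n j : ℝ) : ℂ) • σ1.mulVec (mid Φ n j))) :
    ∀ n : ℕ, h * ∑ j ∈ Finset.range N, ∑ i, ‖Φ n (j : ℤ) i‖ ^ 2 =
      h * ∑ j ∈ Finset.range N, ∑ i, ‖Φ 0 (j : ℤ) i‖ ^ 2 := by
  have hτ0 : (τ : ℂ) ≠ 0 := by exact_mod_cast hτ.ne'
  have hstep : ∀ k : ℕ, (∑ j ∈ Finset.range N, ∑ i, ‖Φ (k+1) (j : ℤ) i‖ ^ 2)
      = ∑ j ∈ Finset.range N, ∑ i, ‖Φ k (j : ℤ) i‖ ^ 2 := by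
    intro k
    set u : ℤ → Fin 2 → ℂ := mid Φ k with hu
    have hd : ∀ j : ℤ, Φ (k+1) j - Φ k j =
        ((τ : ℂ) * (-Complex.I)) • ((-Complex.I) • σ1.mulVec (δx h u j) + σ3.mulVec (u j) +
          (ε : ℂ) • (((Vh k j : ℝ) : ℂ) • u j - ((Ah k j : ℝ) : ℂ) • σ1.mulVec (u j))) := by
      intro j
      have h1 := hscheme k j
      rw [smul_smul] at h1
      have h2 : ((τ : ℂ) * (-Complex.I)) * (Complex.I * (τ : ℂ)⁻¹) = 1 := by
        rw [show ((τ : ℂ) * (-Complex.I)) * (Complex.I * (τ : ℂ)⁻¹)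
            = (-(Complex.I * Complex.I)) * ((τ : ℂ) * (τ : ℂ)⁻¹) from by ring,
          Complex.I_mul_I, mul_inv_cancel₀ hτ0]
        norm_num
      calc Φ (k+1) j - Φ k j
          = ((τ : ℂ) * (-Complex.I)) • ((Complex.I * (τ : ℂ)⁻¹) • (Φ (k+1) j - Φ k j)) := by
            rw [smul_smul, h2, one_smul]
        _ = _ := by rw [h1]
    have hj : ∀ j : ℤ, ((∑ i, ‖Φ (k+1) j i‖ ^ 2) - ∑ i, ‖Φ k j i‖ ^ 2)
        = (τ * h⁻¹) * (gg u j (j-1) - gg u (j+1) j) := by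
      intro j
      have d0 := congrFun (hd j) 0
      have d1 := congrFun (hd j) 1
      simp only [s1mv, s3mv, δx, Pi.smul_apply, Pi.sub_apply, Pi.add_apply, smul_eq_mul,
        Matrix.cons_val_zero, Matrix.cons_val_one, Matrix.head_cons] at d0 d1
      have s0 : Φ (k+1) j 0 + Φ k j 0 = 2 * u j 0 := by
        simp [hu, mid, Pi.smul_apply]
      have s1 : Φ (k+1) j 1 + Φ k j 1 = 2 * u j 1 := by
        simp [hu, mid, Pi.smul_apply]
      have expand : ((∑ i, ‖Φ (k+1) j i‖ ^ 2) - ∑ i, ‖Φ k j i‖ ^ 2)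
          = (‖Φ (k+1) j 0‖^2 - ‖Φ k j 0‖^2) + (‖Φ (k+1) j 1‖^2 - ‖Φ k j 1‖^2) := by
        rw [Fin.sum_univ_two, Fin.sum_univ_two]; ring
      rw [expand, key', key', s0, s1, d0, d1]
      have c2 : ((2 * h : ℝ) : ℂ)⁻¹ = (((2 * h)⁻¹ : ℝ) : ℂ) := (Complex.ofReal_inv _).symm
      rw [c2]
      simp only [gg, Complex.add_re, Complex.add_im, Complex.sub_re, Complex.sub_im,
        Complex.mul_re, Complex.mul_im, Complex.neg_re, Complex.neg_im,
        Complex.I_re, Complex.I_im, Complex.ofReal_re, Complex.ofReal_im,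
        Complex.conj_re, Complex.conj_im, Complex.re_ofNat, Complex.im_ofNat]
      rw [mul_inv]
      ring
    have hperu : ∀ j : ℤ, u (j + N) = u j := by
      intro j; simp [hu, mid, hper]
    have hsum : ∑ j ∈ Finset.range N,
        ((∑ i, ‖Φ (k+1) (j : ℤ) i‖ ^ 2) - ∑ i, ‖Φ k (j : ℤ) i‖ ^ 2) = 0 := by
      have e1 : u ((N : ℤ)) = u ((0:ℕ) : ℤ) := by
        have := hperu 0; simpa using this
      have e2 : u ((N : ℤ) - 1) = u (((0:ℕ) : ℤ) - 1) := by
        have := hperu (-1)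
        rw [show (-1 + (N : ℤ)) = (N : ℤ) - 1 from by ring] at this
        simpa using this
      calc ∑ j ∈ Finset.range N,
            ((∑ i, ‖Φ (k+1) (j : ℤ) i‖ ^ 2) - ∑ i, ‖Φ k (j : ℤ) i‖ ^ 2)
          = ∑ j ∈ Finset.range N, (τ * h⁻¹) *
              ((fun m : ℕ => gg u (m : ℤ) ((m : ℤ) - 1)) j
                - (fun m : ℕ => gg u (m : ℤ) ((m : ℤ) - 1)) (j+1)) := by
            refine Finset.sum_congr rfl fun j _ => ?_
            rw [hj (j : ℤ)]
            simp only
            rw [show (((j+1:ℕ)):ℤ) = (j:ℤ)+1 from by push_cast; ring,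
              show ((j:ℤ)+1)-1 = (j:ℤ) from by ring]
        _ = (τ * h⁻¹) * ∑ j ∈ Finset.range N,
              ((fun m : ℕ => gg u (m : ℤ) ((m : ℤ) - 1)) j
                - (fun m : ℕ => gg u (m : ℤ) ((m : ℤ) - 1)) (j+1)) := by
            rw [Finset.mul_sum]
        _ = (τ * h⁻¹) * ((fun m : ℕ => gg u (m : ℤ) ((m : ℤ) - 1)) 0
              - (fun m : ℕ => gg u (m : ℤ) ((m : ℤ) - 1)) N) := by
            rw [Finset.sum_range_sub']
        _ = 0 := by
            simp only [gg, e1, e2, sub_self, mul_zero]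
    rw [Finset.sum_sub_distrib] at hsum
    exact sub_eq_zero.mp hsum
  intro n
  induction n with
  | zero => rfl
  | succ m ih =>
    rw [hstep m]
    exact ih
end
end

section
/- (Energy conservation of CNFD) Let 0 < ε ≤ 1, τ > 0, and let V_j, A_{1,j} ∈ ℝ (j = 0,…,N) be time-independent. Suppose the sequence of periodic grid functions Φⁿ (n ≥ 0) satisfies the CNFD scheme: iδ⁺_tΦⁿ_j = (−iσ₁δ_x + σ₃)Φ^{n+1/2}_j + ε(V_j I₂ − A_{1,j}σ₁)Φ^{n+1/2}_j for all j = 0,…,N−1 and n ≥ 0. Then the discrete energy E^n_h = h ∑_{j=0}^{N−1} [ −i (Φⁿ_j)* σ₁ δ_xΦⁿ_j + (Φⁿ_j)* σ₃ Φⁿ_j + ε V_j |Φⁿ_j|² − ε A_{1,j} (Φⁿ_j)* σ₁ Φⁿ_j ] satisfies E^n_h = E^0_h for all n ≥ 0. -/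
open Complex Matrix Finset

noncomputable section

/-- The discrete CNFD energy Eⁿ_h. -/
def Eh (h ε : ℝ) (N : ℕ) (V A : ℤ → ℝ) (Φ : ℕ → ℤ → Fin 2 → ℂ) (n : ℕ) : ℂ :=
  (h : ℂ) * ∑ j ∈ Finset.range N,
    ((-Complex.I) * (star (Φ n (j : ℤ)) ⬝ᵥ σ1.mulVec (δx h (Φ n) (j : ℤ))) +
      star (Φ n (j : ℤ)) ⬝ᵥ σ3.mulVec (Φ n (j : ℤ)) +
      ((ε * V (j : ℤ) : ℝ) : ℂ) * ((∑ i, ‖Φ n (j : ℤ) i‖ ^ 2 : ℝ) : ℂ) -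
      ((ε * A (j : ℤ) : ℝ) : ℂ) * (star (Φ n (j : ℤ)) ⬝ᵥ σ1.mulVec (Φ n (j : ℤ))))

namespace CNFDaux

/-- The discrete inner product over one period. -/
def ip (N : ℕ) (x y : ℤ → Fin 2 → ℂ) : ℂ :=
  ∑ j ∈ Finset.range N, star (x (j : ℤ)) ⬝ᵥ y (j : ℤ)

/-- The spatial operator of the CNFD scheme. -/
def Bop (h ε : ℝ) (V A : ℤ → ℝ) (x : ℤ → Fin 2 → ℂ) (j : ℤ) : Fin 2 → ℂ :=
  (-Complex.I) • σ1.mulVec (δx h x j) + σ3.mulVec (x j) +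
    (ε : ℂ) • (((V j : ℝ) : ℂ) • x j - ((A j : ℝ) : ℂ) • σ1.mulVec (x j))

lemma dotp (u w : Fin 2 → ℂ) :
    star u ⬝ᵥ w = (starRingEnd ℂ) (u 0) * w 0 + (starRingEnd ℂ) (u 1) * w 1 := by
  simp [dotProduct, Fin.sum_univ_two, Complex.star_def]

lemma conj_mul_self (z : ℂ) :
    (starRingEnd ℂ) z * z = ((‖z‖ ^ 2 : ℝ) : ℂ) := by
  rw [mul_comm, Complex.mul_conj]; norm_cast
  exact (Complex.sq_norm z).symm ▸ rfl

lemma Bop_c0 (h ε : ℝ) (V A : ℤ → ℝ) (x : ℤ → Fin 2 → ℂ) (j : ℤ) :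
    Bop h ε V A x j 0 =
      -Complex.I * (((2 * h : ℝ) : ℂ)⁻¹ * (x (j + 1) 1 - x (j - 1) 1)) + x j 0 +
        (ε : ℂ) * (((V j : ℝ) : ℂ) * x j 0 - ((A j : ℝ) : ℂ) * x j 1) := by
  simp [Bop, δx, σ1, σ3, Matrix.mulVec, dotProduct, Fin.sum_univ_two,
    Matrix.vecHead, Matrix.vecTail, Pi.smul_apply, Pi.sub_apply, Pi.add_apply, smul_eq_mul]

lemma Bop_c1 (h ε : ℝ) (V A : ℤ → ℝ) (x : ℤ → Fin 2 → ℂ) (j : ℤ) :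
    Bop h ε V A x j 1 =
      -Complex.I * (((2 * h : ℝ) : ℂ)⁻¹ * (x (j + 1) 0 - x (j - 1) 0)) - x j 1 +
        (ε : ℂ) * (((V j : ℝ) : ℂ) * x j 1 - ((A j : ℝ) : ℂ) * x j 0) := by
  simp [Bop, δx, σ1, σ3, Matrix.mulVec, dotProduct, Fin.sum_univ_two,
    Matrix.vecHead, Matrix.vecTail, Pi.smul_apply, Pi.sub_apply, Pi.add_apply, smul_eq_mul]
  ring

lemma star_ip (N : ℕ) (x y : ℤ → Fin 2 → ℂ) : star (ip N x y) = ip N y x := by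
  unfold ip
  rw [star_sum]
  refine Finset.sum_congr rfl fun j _ => ?_
  simp [dotProduct, Fin.sum_univ_two, Complex.star_def, map_add, _root_.map_mul]
  ring

lemma shift_sum (N : ℕ) (F : ℤ → ℂ) (hF : ∀ j : ℤ, F (j + N) = F j) :
    ∑ j ∈ Finset.range N, F ((j : ℤ) + 1) = ∑ j ∈ Finset.range N, F (j : ℤ) := by
  have h1 : ∑ j ∈ Finset.range (N + 1), F (j : ℤ)
      = (∑ j ∈ Finset.range N, F ((j : ℤ) + 1)) + F 0 := by
    rw [Finset.sum_range_succ']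
    push_cast
    rfl
  have h2 : ∑ j ∈ Finset.range (N + 1), F (j : ℤ)
      = (∑ j ∈ Finset.range N, F (j : ℤ)) + F (N : ℤ) :=
    Finset.sum_range_succ _ _
  have h3 : F (N : ℤ) = F 0 := by simpa using hF 0
  have h4 := h1.symm.trans h2
  rw [h3] at h4
  exact add_right_cancel h4

lemma shift_sum' (N : ℕ) (F : ℤ → ℂ) (hF : ∀ j : ℤ, F (j + N) = F j) :
    ∑ j ∈ Finset.range N, F ((j : ℤ) - 1) = ∑ j ∈ Finset.range N, F (j : ℤ) := by
  have hper : ∀ j : ℤ, F (j + N - 1) = F (j - 1) := by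
    intro j
    rw [show j + (N : ℤ) - 1 = (j - 1) + N by ring, hF]
  have := shift_sum N (fun j => F (j - 1)) hper
  simp only [add_sub_cancel_right] at this
  exact this.symm

/-- Summation by parts over a periodic grid. -/
lemma sbp (N : ℕ) (f g : ℤ → ℂ) (hf : ∀ j : ℤ, f (j + N) = f j)
    (hg : ∀ j : ℤ, g (j + N) = g j) :
    (∑ j ∈ Finset.range N, f (j : ℤ) * (g ((j : ℤ) + 1) - g ((j : ℤ) - 1)))
      + ∑ j ∈ Finset.range N, (f ((j : ℤ) + 1) - f ((j : ℤ) - 1)) * g (j : ℤ) = 0 := by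
  have e1 : ∑ j ∈ Finset.range N, f (j : ℤ) * g ((j : ℤ) + 1)
      = ∑ j ∈ Finset.range N, f ((j : ℤ) - 1) * g (j : ℤ) := by
    have hper : ∀ j : ℤ, f (j + N - 1) * g (j + N) = f (j - 1) * g j := by
      intro j
      rw [show j + (N : ℤ) - 1 = (j - 1) + N by ring, hf, hg]
    have := shift_sum N (fun j => f (j - 1) * g j) hper
    simp only [add_sub_cancel_right] at this
    exact this
  have e2 : ∑ j ∈ Finset.range N, f (j : ℤ) * g ((j : ℤ) - 1)
      = ∑ j ∈ Finset.range N, f ((j : ℤ) + 1) * g (j : ℤ) := by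
    have hper : ∀ j : ℤ, f (j + N + 1) * g (j + N) = f (j + 1) * g j := by
      intro j
      rw [show j + (N : ℤ) + 1 = (j + 1) + N by ring, hf, hg]
    have := shift_sum' N (fun j => f (j + 1) * g j) hper
    simp only [sub_add_cancel] at this
    exact this
  simp only [mul_sub, sub_mul]
  rw [Finset.sum_sub_distrib, Finset.sum_sub_distrib]
  linear_combination e1 - e2

/-- Self-adjointness of the spatial operator w.r.t. the periodic inner product. -/
lemma ip_Bop_symm (N : ℕ) (h ε : ℝ) (V A : ℤ → ℝ) (x y : ℤ → Fin 2 → ℂ)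
    (hx : ∀ j : ℤ, x (j + N) = x j) (hy : ∀ j : ℤ, y (j + N) = y j) :
    ip N (Bop h ε V A x) y = ip N x (Bop h ε V A y) := by
  rw [← sub_eq_zero]
  unfold ip
  rw [← Finset.sum_sub_distrib]
  have key : ∀ j : ℤ,
      star (Bop h ε V A x j) ⬝ᵥ y j - star (x j) ⬝ᵥ Bop h ε V A y j
      = Complex.I * ((2 * h : ℝ) : ℂ)⁻¹ *
          ((starRingEnd ℂ) (x j 1) * (y (j + 1) 0 - y (j - 1) 0))
        + Complex.I * ((2 * h : ℝ) : ℂ)⁻¹ *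
          (((starRingEnd ℂ) (x (j + 1) 1) - (starRingEnd ℂ) (x (j - 1) 1)) * y j 0)
        + Complex.I * ((2 * h : ℝ) : ℂ)⁻¹ *
          ((starRingEnd ℂ) (x j 0) * (y (j + 1) 1 - y (j - 1) 1))
        + Complex.I * ((2 * h : ℝ) : ℂ)⁻¹ *
          (((starRingEnd ℂ) (x (j + 1) 0) - (starRingEnd ℂ) (x (j - 1) 0)) * y j 1) := by
    intro j
    rw [dotp, dotp, Bop_c0, Bop_c1, Bop_c0, Bop_c1]
    simp only [map_add, map_sub, _root_.map_mul, map_neg, map_inv₀, Complex.conj_I,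
      Complex.conj_ofReal]
    ring
  simp only [key]
  rw [Finset.sum_add_distrib, Finset.sum_add_distrib, Finset.sum_add_distrib,
    ← Finset.mul_sum, ← Finset.mul_sum, ← Finset.mul_sum, ← Finset.mul_sum]
  have hf0 : ∀ j : ℤ, (starRingEnd ℂ) (x (j + N) 0) = (starRingEnd ℂ) (x j 0) := by
    intro j; rw [hx]
  have hf1 : ∀ j : ℤ, (starRingEnd ℂ) (x (j + N) 1) = (starRingEnd ℂ) (x j 1) := by
    intro j; rw [hx]
  have hg0 : ∀ j : ℤ, y (j + N) 0 = y j 0 := by intro j; rw [hy]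
  have hg1 : ∀ j : ℤ, y (j + N) 1 = y j 1 := by intro j; rw [hy]
  have s1 := sbp N (fun k => (starRingEnd ℂ) (x k 1)) (fun k => y k 0) hf1 hg0
  have s2 := sbp N (fun k => (starRingEnd ℂ) (x k 0)) (fun k => y k 1) hf0 hg1
  linear_combination Complex.I * ((2 * h : ℝ) : ℂ)⁻¹ * s1
    + Complex.I * ((2 * h : ℝ) : ℂ)⁻¹ * s2

/-- The discrete energy as a quadratic form. -/
lemma Eh_eq (h ε : ℝ) (N : ℕ) (V A : ℤ → ℝ) (Φ : ℕ → ℤ → Fin 2 → ℂ) (n : ℕ) :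
    Eh h ε N V A Φ n = (h : ℂ) * ip N (Φ n) (Bop h ε V A (Φ n)) := by
  unfold Eh ip
  congr 1
  refine Finset.sum_congr rfl fun j _ => ?_
  have hn : ((∑ i, ‖Φ n (j : ℤ) i‖ ^ 2 : ℝ) : ℂ)
      = (starRingEnd ℂ) (Φ n (j : ℤ) 0) * Φ n (j : ℤ) 0
        + (starRingEnd ℂ) (Φ n (j : ℤ) 1) * Φ n (j : ℤ) 1 := by
    rw [Fin.sum_univ_two, Complex.ofReal_add, ← conj_mul_self, ← conj_mul_self]
  rw [hn, dotp, dotp, dotp, dotp, Bop_c0, Bop_c1]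
  simp only [δx, σ1, σ3, Matrix.mulVec, dotProduct, Fin.sum_univ_two,
    Pi.smul_apply, Pi.sub_apply, smul_eq_mul, Matrix.cons_val_zero, Matrix.cons_val_one,
    Matrix.head_cons, Matrix.cons_val', Matrix.empty_val', Matrix.cons_val_fin_one,
    Matrix.head_fin_const, Matrix.of_apply, Complex.ofReal_mul]
  ring

end CNFDaux

open CNFDaux in
/-- Energy conservation of the Crank–Nicolson finite difference (CNFD) method
for the 1D Dirac equation with time-independent potentials. -/
theorem cnfd_energy_conservation (a b : ℝ) (hab : a < b) (N : ℕ) (hN : 0 < N)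
    (hNe : Even N) (h : ℝ) (hh : h = (b - a) / N)
    (τ ε : ℝ) (hτ : 0 < τ) (hε0 : 0 < ε) (hε1 : ε ≤ 1)
    (V A : ℤ → ℝ)
    (hVper : ∀ j : ℤ, V (j + N) = V j) (hAper : ∀ j : ℤ, A (j + N) = A j)
    (Φ : ℕ → ℤ → Fin 2 → ℂ)
    (hper : ∀ n : ℕ, ∀ j : ℤ, Φ n (j + N) = Φ n j)
    (hscheme : ∀ n : ℕ, ∀ j : ℤ,
      Complex.I • ((τ : ℂ)⁻¹ • (Φ (n + 1) j - Φ n j)) =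
        (-Complex.I) • σ1.mulVec (δx h (mid Φ n) j) + σ3.mulVec (mid Φ n j) +
          (ε : ℂ) • (((V j : ℝ) : ℂ) • mid Φ n j -
            ((A j : ℝ) : ℂ) • σ1.mulVec (mid Φ n j))) :
    ∀ n : ℕ, Eh h ε N V A Φ n = Eh h ε N V A Φ 0 := by
  have step : ∀ n : ℕ, Eh h ε N V A Φ (n + 1) = Eh h ε N V A Φ n := by
    intro n
    set d : ℤ → Fin 2 → ℂ := fun k => Φ (n + 1) k - Φ n k with hd
    have hBm : ∀ j : ℤ, Bop h ε V A (mid Φ n) j = (Complex.I * (τ : ℂ)⁻¹) • d j := by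
      intro j
      have h1 := hscheme n j
      rw [smul_smul] at h1
      exact h1.symm
    have hmper : ∀ j : ℤ, mid Φ n (j + N) = mid Φ n j := by
      intro j; simp [mid, hper]
    have hdper : ∀ j : ℤ, d (j + N) = d j := by
      intro j; simp only [hd]; rw [hper, hper]
    have hsplit : ip N (Φ (n + 1)) (Bop h ε V A (Φ (n + 1)))
          - ip N (Φ n) (Bop h ε V A (Φ n))
        = ip N d (Bop h ε V A (mid Φ n)) + ip N (mid Φ n) (Bop h ε V A d) := by
      unfold ip
      rw [← Finset.sum_sub_distrib, ← Finset.sum_add_distrib]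
      refine Finset.sum_congr rfl fun j _ => ?_
      rw [dotp, dotp, dotp, dotp, Bop_c0, Bop_c1, Bop_c0, Bop_c1, Bop_c0, Bop_c1,
        Bop_c0, Bop_c1]
      simp only [hd, mid, Pi.sub_apply, Pi.add_apply, Pi.smul_apply, smul_eq_mul,
        map_add, map_sub, _root_.map_mul, map_inv₀, Complex.conj_ofReal, map_ofNat]
      ring
    have h1 : ip N d (Bop h ε V A (mid Φ n)) = (Complex.I * (τ : ℂ)⁻¹) * ip N d d := by
      unfold ip
      rw [Finset.mul_sum]
      refine Finset.sum_congr rfl fun j _ => ?_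
      rw [hBm ((j : ℤ))]
      rw [dotProduct_smul, smul_eq_mul]
    have h2 : ip N (mid Φ n) (Bop h ε V A d) = star (ip N d (Bop h ε V A (mid Φ n))) := by
      rw [star_ip]
      exact (ip_Bop_symm N h ε V A (mid Φ n) d hmper hdper).symm
    have h3 : star (ip N d d) = ip N d d := star_ip N d d
    have hstar : star ((Complex.I * (τ : ℂ)⁻¹) * ip N d d)
        = -((Complex.I * (τ : ℂ)⁻¹) * ip N d d) := by
      rw [star_mul', h3]
      simp only [Complex.star_def, _root_.map_mul, Complex.conj_I, map_inv₀, Complex.conj_ofReal]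
      ring
    have hmain : ip N (Φ (n + 1)) (Bop h ε V A (Φ (n + 1)))
        = ip N (Φ n) (Bop h ε V A (Φ n)) := by
      rw [h2, h1, hstar] at hsplit
      linear_combination hsplit
    rw [Eh_eq, Eh_eq, hmain]
  intro n
  induction n with
  | zero => rfl
  | succ n ih => rw [step n, ih]

end
end

section
/- (Stability condition for LFFD, amplification-symbol bound) Let h > 0, V_max ≥ 0, A_max ≥ 0, 0 < ε ≤ 1, and let V, A ∈ ℝ with |V| ≤ V_max and |A| ≤ A_max. Suppose 0 < τ ≤ h / (V_max h + √(h² + (1 + h A_max)²)). Then for every φ ∈ ℝ and every sign σ ∈ {−1, +1}, the eigenvalue θ = εV + σ √((sin(φ)/h − εA)² + 1) of the LFFD amplification symbol satisfies τ|θ| ≤ 1; consequently, by the unit-modulus root property of the leap-frog amplification polynomial λ² + 2iτθλ − 1 = 0, every Fourier mode of the leap-frog finite difference (LFFD) scheme with constant potentials V and A is stable. -/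
set_option maxHeartbeats 1000000


open Complex

/-- Stability of the LFFD method: under the stability condition
τ ≤ h/(V_max h + √(h² + (1 + hA_max)²)), each eigenvalue
θ = εV ± √((sin φ/h − εA)² + 1) of the LFFD amplification symbol satisfies
τ|θ| ≤ 1, and consequently every root λ of λ² + 2iτθλ − 1 = 0 has |λ| = 1,
i.e. every Fourier mode of the LFFD scheme is stable. -/
theorem lffd_stability (h Vmax Amax ε τ V A : ℝ) (hh : 0 < h)
    (hVmax : 0 ≤ Vmax) (hAmax : 0 ≤ Amax) (hε0 : 0 < ε) (hε1 : ε ≤ 1)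
    (hV : |V| ≤ Vmax) (hA : |A| ≤ Amax) (hτ0 : 0 < τ)
    (hτ : τ ≤ h / (Vmax * h + Real.sqrt (h ^ 2 + (1 + h * Amax) ^ 2))) :
    ∀ φ : ℝ, ∀ s : ℝ, s = 1 ∨ s = -1 →
      τ * |ε * V + s * Real.sqrt ((Real.sin φ / h - ε * A) ^ 2 + 1)| ≤ 1 ∧
      ∀ lam : ℂ,
        lam ^ 2 +
            2 * Complex.I *
              ((τ * (ε * V + s * Real.sqrt ((Real.sin φ / h - ε * A) ^ 2 + 1)) : ℝ) : ℂ) *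
              lam - 1 = 0 →
          ‖lam‖ = 1 := by
  intro φ s hs
  set st := Real.sqrt ((Real.sin φ / h - ε * A) ^ 2 + 1) with hst
  set S := Real.sqrt (h ^ 2 + (1 + h * Amax) ^ 2) with hS
  have hS0 : h < S := by
    have : Real.sqrt (h^2) < S := by
      apply Real.sqrt_lt_sqrt (sq_nonneg h)
      nlinarith [sq_nonneg (1 + h*Amax), mul_nonneg hh.le hAmax]
    rwa [Real.sqrt_sq hh.le] at this
  have hD0 : 0 < Vmax * h + S := by nlinarith [mul_nonneg hVmax hh.le]
  have hstS : h * st ≤ S := by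
    have h1 : h * st = Real.sqrt ((Real.sin φ - h * (ε*A))^2 + h^2) := by
      rw [hst, ← Real.sqrt_sq hh.le, ← Real.sqrt_mul (sq_nonneg h)]
      congr 1
      field_simp
      rw [Real.sq_sqrt (sq_nonneg h)]
    rw [h1, hS]
    apply Real.sqrt_le_sqrt
    have hb : |Real.sin φ - h * (ε*A)| ≤ 1 + h * Amax := by
      have := abs_sub (Real.sin φ) (h * (ε*A))
      have h2 : |h * (ε*A)| ≤ h * Amax := by
        rw [abs_mul, abs_of_pos hh, abs_mul, abs_of_pos hε0]
        have : ε * |A| ≤ 1 * Amax := by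
          apply mul_le_mul hε1 hA (abs_nonneg A) (by norm_num)
        nlinarith
      calc |Real.sin φ - h * (ε*A)| ≤ |Real.sin φ| + |h * (ε*A)| := abs_sub _ _
        _ ≤ 1 + h * Amax := add_le_add (abs_le.mpr ⟨Real.neg_one_le_sin φ, Real.sin_le_one φ⟩) h2
    nlinarith [abs_nonneg (Real.sin φ - h * (ε*A)), _root_.sq_abs (Real.sin φ - h * (ε*A)),
      sq_nonneg (1 + h*Amax)]
  have hst0 : 0 ≤ st := Real.sqrt_nonneg _
  have hθ : |ε * V + s * st| ≤ (Vmax * h + S) / h := by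
    have hεV : |ε * V| ≤ Vmax := by
      rw [abs_mul, abs_of_pos hε0]
      calc ε * |V| ≤ 1 * Vmax := mul_le_mul hε1 hV (abs_nonneg V) (by norm_num)
        _ = Vmax := one_mul _
    have hss : |s * st| ≤ S / h := by
      have : |s| = 1 := by rcases hs with rfl | rfl <;> simp
      rw [abs_mul, this, one_mul, _root_.abs_of_nonneg hst0]
      rw [le_div_iff₀ hh]
      linarith [hstS]
    calc |ε * V + s * st| ≤ |ε * V| + |s * st| := abs_add_le _ _
      _ ≤ Vmax + S / h := add_le_add hεV hss
      _ = (Vmax * h + S) / h := by field_simp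
  have part1 : τ * |ε * V + s * st| ≤ 1 := by
    calc τ * |ε * V + s * st| ≤ (h / (Vmax * h + S)) * ((Vmax * h + S) / h) := by
          apply mul_le_mul hτ hθ (abs_nonneg _) (le_of_lt (div_pos hh hD0))
      _ = 1 := by field_simp; exact div_self (by linarith [mul_comm h Vmax] : 0 < h * Vmax + S).ne'
  refine ⟨part1, ?_⟩
  intro lam heq
  set a : ℝ := τ * (ε * V + s * st) with ha
  have haa : |a| ≤ 1 := by rw [ha, abs_mul, abs_of_pos hτ0]; exact part1
  have ha2 : a^2 ≤ 1 := by exact (sq_le_one_iff_abs_le_one a).mpr haa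
  set r : ℝ := Real.sqrt (1 - a^2) with hr
  have hr2 : r^2 = 1 - a^2 := Real.sq_sqrt (by linarith)
  have key : (lam + Complex.I * (a:ℂ))^2 = ((1:ℂ) - (a:ℂ)^2) := by
    linear_combination heq + (a:ℂ)^2 * Complex.I_sq
  clear_value a r
  have hr' : ((r:ℂ))^2 = (1:ℂ) - (a:ℂ)^2 := by
    have h3 := congrArg (fun x : ℝ => (x : ℂ)) hr2
    push_cast at h3
    exact h3
  have hfac : (lam + Complex.I * (a:ℂ) - (r:ℂ)) * (lam + Complex.I * (a:ℂ) + (r:ℂ)) = 0 := by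
    linear_combination key - hr'
  have habs : ∀ c : ℝ, lam = (c:ℂ) - Complex.I * (a:ℂ) → c^2 = 1 - a^2 → ‖lam‖ = 1 := by
    intro c hc hc2
    have : (‖lam‖)^2 = 1 := by
      rw [hc, Complex.sq_norm, Complex.normSq_apply]
      simp
      nlinarith
    nlinarith [norm_nonneg lam]
  rcases mul_eq_zero.mp hfac with h0 | h0
  · exact habs r (by linear_combination h0) hr2
  · exact habs (-r) (by push_cast; linear_combination h0) (by nlinarith)
end

section
/- (Stability condition for LFFS, amplification-symbol bound) Let h > 0, V_max ≥ 0, A_max ≥ 0, 0 < ε ≤ 1, and let V, A ∈ ℝ with |V| ≤ V_max and |A| ≤ A_max. Suppose 0 < τ ≤ h / (V_max h + √(h² + (π + h A_max)²)). Then for every real s with |s| ≤ π/h and every sign σ ∈ {−1, +1}, the eigenvalue θ = εV + σ √((s − εA)² + 1) of the LFFS amplification symbol satisfies τ|θ| ≤ 1; consequently, by the unit-modulus root property of the leap-frog amplification polynomial λ² + 2iτθλ − 1 = 0, every Fourier mode of the leap-frog Fourier spectral (LFFS) scheme with constant potentials V and A is stable. -/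
open Complex

/-- Root-modulus lemma for the leap-frog amplification polynomial. -/
lemma leapfrog_root_abs (c : ℝ) (hc : |c| ≤ 1) (lam : ℂ)
    (hl : lam ^ 2 + 2 * Complex.I * (c : ℂ) * lam - 1 = 0) :
    ‖lam‖ = 1 := by
  have hc2 : c ^ 2 ≤ 1 := by
    have := abs_le.mp hc
    nlinarith [this.1, this.2]
  set r : ℝ := Real.sqrt (1 - c ^ 2) with hr
  have hr2 : r ^ 2 = 1 - c ^ 2 := Real.sq_sqrt (by linarith)
  have key : (lam + Complex.I * c - r) * (lam + Complex.I * c + r) = 0 := by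
    have hrc : (r : ℂ) ^ 2 = 1 - (c : ℂ) ^ 2 := by
      rw [← Complex.ofReal_pow, hr2]; push_cast; ring
    have hI : Complex.I ^ 2 = -1 := Complex.I_sq
    calc (lam + Complex.I * c - r) * (lam + Complex.I * c + r)
        = (lam ^ 2 + 2 * Complex.I * (c : ℂ) * lam - 1)
          + (Complex.I ^ 2 + 1) * c ^ 2 + (1 - (c:ℂ)^2 - (r:ℂ)^2) := by ring
      _ = 0 := by rw [hl, hI, hrc]; ring
  have habs : ∀ x : ℝ, x ^ 2 = 1 - c ^ 2 →
      ‖(x : ℂ) - Complex.I * c‖ = 1 := by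
    intro x hx
    have h1 : ‖(x : ℂ) - Complex.I * c‖ ^ 2 = 1 := by
      rw [Complex.sq_norm, Complex.normSq_apply]
      simp [Complex.sub_re, Complex.sub_im, Complex.mul_re, Complex.mul_im]
      nlinarith [hx]
    nlinarith [norm_nonneg ((x : ℂ) - Complex.I * c), h1]
  rcases mul_eq_zero.mp key with h0 | h0
  · have : lam = (r : ℂ) - Complex.I * c := by linear_combination h0
    rw [this]; exact habs r hr2
  · have : lam = ((-r : ℝ) : ℂ) - Complex.I * c := by push_cast; linear_combination h0
    rw [this]; exact habs (-r) (by rw [neg_pow]; simpa using hr2)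

/-- Stability of the LFFS method: under the stability condition
τ ≤ h/(V_max h + √(h² + (π + hA_max)²)), each eigenvalue
θ = εV ± √((s − εA)² + 1) (with |s| ≤ π/h) of the LFFS amplification symbol
satisfies τ|θ| ≤ 1, and consequently every root λ of λ² + 2iτθλ − 1 = 0 has
|λ| = 1, i.e. every Fourier mode of the LFFS scheme is stable. -/
theorem lffs_stability (h Vmax Amax ε τ V A : ℝ) (hh : 0 < h)
    (hVmax : 0 ≤ Vmax) (hAmax : 0 ≤ Amax) (hε0 : 0 < ε) (hε1 : ε ≤ 1)
    (hV : |V| ≤ Vmax) (hA : |A| ≤ Amax) (hτ0 : 0 < τ)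
    (hτ : τ ≤ h / (Vmax * h + Real.sqrt (h ^ 2 + (Real.pi + h * Amax) ^ 2))) :
    ∀ s : ℝ, |s| ≤ Real.pi / h → ∀ sg : ℝ, sg = 1 ∨ sg = -1 →
      τ * |ε * V + sg * Real.sqrt ((s - ε * A) ^ 2 + 1)| ≤ 1 ∧
      ∀ lam : ℂ,
        lam ^ 2 +
            2 * Complex.I *
              ((τ * (ε * V + sg * Real.sqrt ((s - ε * A) ^ 2 + 1)) : ℝ) : ℂ) *
              lam - 1 = 0 →
          ‖lam‖ = 1 := by
  intro s hs sg hsg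
  have hπ : (0:ℝ) < Real.pi := Real.pi_pos
  set r := Real.sqrt ((s - ε * A) ^ 2 + 1) with hrdef
  have hr0 : 0 ≤ r := Real.sqrt_nonneg _
  -- bound r
  have hbound : |s - ε * A| ≤ Real.pi / h + Amax := by
    have h1 : |s - ε * A| ≤ |s| + ε * |A| := by
      calc |s - ε * A| ≤ |s| + |ε * A| := abs_sub _ _
        _ = |s| + ε * |A| := by rw [abs_mul, abs_of_pos hε0]
    have h2 : ε * |A| ≤ Amax := by
      calc ε * |A| ≤ 1 * |A| := by
            apply mul_le_mul_of_nonneg_right hε1 (abs_nonneg _)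
        _ = |A| := one_mul _
        _ ≤ Amax := hA
    linarith
  have hrle : r ≤ Real.sqrt ((Real.pi / h + Amax) ^ 2 + 1) := by
    apply Real.sqrt_le_sqrt
    nlinarith [abs_nonneg (s - ε * A), hbound, _root_.sq_abs (s - ε * A),
      Real.pi_pos, div_pos Real.pi_pos hh]
  -- the key identity: √(h² + (π + hAmax)²) = h √(1 + (π/h + Amax)²)
  have hkey : Real.sqrt (h ^ 2 + (Real.pi + h * Amax) ^ 2)
      = h * Real.sqrt ((Real.pi / h + Amax) ^ 2 + 1) := by
    rw [← Real.sqrt_sq hh.le, ← Real.sqrt_mul (sq_nonneg h)]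
    congr 1
    field_simp
    rw [Real.sqrt_sq hh.le]
    ring
  set K := Vmax + Real.sqrt ((Real.pi / h + Amax) ^ 2 + 1) with hKdef
  have hK1 : 1 ≤ Real.sqrt ((Real.pi / h + Amax) ^ 2 + 1) := by
    have h1 : Real.sqrt 1 ≤ Real.sqrt ((Real.pi / h + Amax) ^ 2 + 1) :=
      Real.sqrt_le_sqrt (by nlinarith [sq_nonneg (Real.pi / h + Amax)])
    simpa using h1
  have hK0 : 0 < K := by positivity
  have hτK : τ * K ≤ 1 := by
    have : h / (Vmax * h + Real.sqrt (h ^ 2 + (Real.pi + h * Amax) ^ 2))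
        = 1 / K := by
      have hKne : Vmax + Real.sqrt ((Real.pi / h + Amax) ^ 2 + 1) ≠ 0 := by
        have : 0 < Real.sqrt ((Real.pi / h + Amax) ^ 2 + 1) := by linarith
        positivity
      rw [hkey, hKdef]
      field_simp
    rw [this] at hτ
    calc τ * K ≤ (1 / K) * K := by
          apply mul_le_mul_of_nonneg_right hτ hK0.le
      _ = 1 := by field_simp
  -- bound |θ|
  have hθ : |ε * V + sg * r| ≤ K := by
    have h1 : |ε * V + sg * r| ≤ ε * |V| + |sg| * r := by
      calc |ε * V + sg * r| ≤ |ε * V| + |sg * r| := abs_add_le _ _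
        _ = ε * |V| + |sg| * r := by
            rw [abs_mul, abs_mul, abs_of_pos hε0, _root_.abs_of_nonneg hr0]
    have hsg1 : |sg| = 1 := by rcases hsg with h | h <;> simp [h]
    have h2 : ε * |V| ≤ Vmax := by
      calc ε * |V| ≤ 1 * |V| := mul_le_mul_of_nonneg_right hε1 (abs_nonneg _)
        _ = |V| := one_mul _
        _ ≤ Vmax := hV
    rw [hsg1, one_mul] at h1
    rw [hKdef]
    linarith
  have main : τ * |ε * V + sg * r| ≤ 1 := by
    calc τ * |ε * V + sg * r| ≤ τ * K :=
          mul_le_mul_of_nonneg_left hθ hτ0.le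
      _ ≤ 1 := hτK
  refine ⟨main, fun lam hl => ?_⟩
  apply leapfrog_root_abs (τ * (ε * V + sg * r)) ?_ lam hl
  rw [abs_mul, abs_of_pos hτ0]
  exact main
end
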